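/- arXiv:1202.2395 — 3 statements merged into one kernel-verified Lean document; each statement's English description precedes it below -/
import Mathlib

section
/- For real e₂ with |e₂| < min(1/|β|, 1/|1−β|) (interpreting 1/0 as ∞), the function f(e₂) = α(1+(1−β)e₂)/(1+βe₂) + (1−α)(1+βe₂)/(1+(1−β)e₂) has second-order Taylor expansion at 0 equal to 1 − (1−2α)(1−2β)e₂ + (1−α−β)(1−2β)e₂², i.e., f(e₂) − [1 − (1−2α)(1−2β)e₂ + (1−α−β)(1−2β)e₂²] = O(e₂³) as e₂ → 0. -/
open Filter Asymptotics

/-- Second-order Taylor expansion of the ratio-product-ratio factor: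
the remainder is O(e₂³) as e₂ → 0. -/
theorem stmt3 (α β : ℝ) :
    (fun e₂ : ℝ =>
        (α * (1 + (1 - β) * e₂) / (1 + β * e₂)
          + (1 - α) * (1 + β * e₂) / (1 + (1 - β) * e₂))
        - (1 - (1 - 2*α) * (1 - 2*β) * e₂ + (1 - α - β) * (1 - 2*β) * e₂^2))
      =O[nhds (0 : ℝ)] (fun e₂ : ℝ => e₂^3) := by
  set c0 : ℝ := -1 + 4*β - 5*β^2 + 2*β^3 + α - 4*α*β + 6*α*β^2 - 4*α*β^3 with hc0
  set c1 : ℝ := -β + 4*β^2 - 5*β^3 + 2*β^4 + α*β - 3*α*β^2 + 2*α*β^3 with hc1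
  set h : ℝ → ℝ := fun e => (c0 + c1*e) / ((1 + β*e) * (1 + (1-β)*e)) with hh
  have h1 : ∀ᶠ e in nhds (0:ℝ), 1 + β*e ≠ 0 := by
    have hc : ContinuousAt (fun e : ℝ => 1 + β*e) 0 := by fun_prop
    have := hc.eventually_ne (by norm_num : (1:ℝ) + β*0 ≠ 0)
    simpa using this
  have h2 : ∀ᶠ e in nhds (0:ℝ), 1 + (1-β)*e ≠ 0 := by
    have hc : ContinuousAt (fun e : ℝ => 1 + (1-β)*e) 0 := by fun_prop
    have := hc.eventually_ne (by norm_num : (1:ℝ) + (1-β)*0 ≠ 0)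
    simpa using this
  have heq : (fun e₂ : ℝ =>
        (α * (1 + (1 - β) * e₂) / (1 + β * e₂)
          + (1 - α) * (1 + β * e₂) / (1 + (1 - β) * e₂))
        - (1 - (1 - 2*α) * (1 - 2*β) * e₂ + (1 - α - β) * (1 - 2*β) * e₂^2))
      =ᶠ[nhds (0:ℝ)] fun e => e^3 * h e := by
    filter_upwards [h1, h2] with e he1 he2
    simp only [hh, hc0, hc1]
    field_simp
    ring
  have hOh : h =O[nhds (0:ℝ)] (fun _ : ℝ => (1:ℝ)) := by
    have hcont : ContinuousAt h 0 := by
      apply ContinuousAt.div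
      · fun_prop
      · fun_prop
      · norm_num
    exact hcont.tendsto.isBigO_one ℝ
  calc (fun e₂ : ℝ =>
        (α * (1 + (1 - β) * e₂) / (1 + β * e₂)
          + (1 - α) * (1 + β * e₂) / (1 + (1 - β) * e₂))
        - (1 - (1 - 2*α) * (1 - 2*β) * e₂ + (1 - α - β) * (1 - 2*β) * e₂^2))
      =O[nhds (0:ℝ)] (fun e => e^3 * h e) := heq.isBigO
    _ =O[nhds (0:ℝ)] (fun e : ℝ => e^3) := by
        have := (isBigO_refl (fun e : ℝ => e^3) (nhds 0)).mul hOh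
        simpa using this
end

section
/- The difference MSE(ȳ) − MSE₁(ŷ_{α,β}) = ((1−f)/n)·Ȳ²·C_X²·(1−2α)(1−2β)·[2C − (1−2α)(1−2β)] is positive if and only if either (1−2α)(1−2β) > 0 and C > (1/2)(1−2α)(1−2β), or (1−2α)(1−2β) < 0 and C < (1/2)(1−2α)(1−2β), assuming ((1−f)/n)Ȳ²C_X² > 0. -/
/-- The ratio-product-ratio estimator beats the sample mean (to first degree) iff
(1-2α)(1-2β) and 2C - (1-2α)(1-2β) have the same sign. -/
theorem stmt14 (f n Ybar CX CY C α β : ℝ)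
    (hpos : 0 < ((1 - f)/n) * Ybar^2 * CX^2) :
    (0 < ((1 - f)/n) * Ybar^2 * CY^2
        - ((1 - f)/n) * Ybar^2
            * (CY^2 + CX^2 * ((1 - 2*α) * (1 - 2*β)) * ((1 - 2*α) * (1 - 2*β) - 2*C)))
    ↔ ((0 < (1 - 2*α) * (1 - 2*β) ∧ (1/2) * ((1 - 2*α) * (1 - 2*β)) < C)
        ∨ ((1 - 2*α) * (1 - 2*β) < 0 ∧ C < (1/2) * ((1 - 2*α) * (1 - 2*β)))) := by
  set K := ((1 - f)/n) * Ybar^2 * CX^2 with hK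
  set θ := (1 - 2*α) * (1 - 2*β) with hθ
  have hE : ((1 - f)/n) * Ybar^2 * CY^2
        - ((1 - f)/n) * Ybar^2 * (CY^2 + CX^2 * θ * (θ - 2*C))
      = K * (θ * (2*C - θ)) := by rw [hK]; ring
  rw [hE]
  rw [mul_pos_iff_of_pos_left hpos, mul_pos_iff]
  constructor
  · rintro (⟨h1, h2⟩ | ⟨h1, h2⟩)
    · exact Or.inl ⟨h1, by linarith⟩
    · exact Or.inr ⟨h1, by nlinarith⟩
  · rintro (⟨h1, h2⟩ | ⟨h1, h2⟩)
    · exact Or.inl ⟨h1, by linarith⟩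
    · exact Or.inr ⟨h1, by linarith⟩
end

section
/- Under the constraint (1−2α)(1−2β) = C, the first-order bias of the AOE equals ((1−f)/n)·C_X²·Ȳ·(1/2)·[C(1−2C) + (1−2β)²]; in particular, if 0 < C < 1/2 then this bias is strictly positive for every real β, since C(1−2C) > 0. -/
/-- First-order bias of an AOE, and its strict positivity when 0 < C < 1/2. -/
theorem stmt18 (f n Ybar CX C α β : ℝ)
    (hpos : 0 < ((1 - f)/n) * CX^2 * Ybar)
    (hconstraint : (1 - 2*α) * (1 - 2*β) = C) (hβ : β ≠ 1/2) :
    ((1 - f)/n) * (1 - 2*β) * (1 - α - β - (1 - 2*α) * C) * CX^2 * Ybar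
      = ((1 - f)/n) * CX^2 * Ybar * (1/2) * (C * (1 - 2*C) + (1 - 2*β)^2)
    ∧ (0 < C → C < 1/2 →
        0 < ((1 - f)/n) * (1 - 2*β) * (1 - α - β - (1 - 2*α) * C) * CX^2 * Ybar) := by
  have hid : ((1 - f)/n) * (1 - 2*β) * (1 - α - β - (1 - 2*α) * C) * CX^2 * Ybar
      = ((1 - f)/n) * CX^2 * Ybar * (1/2) * (C * (1 - 2*C) + (1 - 2*β)^2) := by
    subst hconstraint; ring
  refine ⟨hid, fun hC1 hC2 => ?_⟩
  rw [hid]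
  have hq : 0 < C * (1 - 2*C) + (1 - 2*β)^2 := by nlinarith [sq_nonneg (1 - 2*β)]
  nlinarith [mul_pos hpos hq]
end
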